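/- Conditioned on the 3-D distance Z_c = z, the angle Ω between the ground projection of the TsUE–ABS link and the direction from the stadium center to the TBS is uniformly distributed: on [0, 2π) when √(R₂² + h²) ≤ z ≤ √((R₁ − d)² + h²), and uniform on [−ω̂, ω̂] with density 1/(2ω̂) when √((R₁ − d)² + h²) < z ≤ √((R₁ + d)² + h²), where ω̂ = arcsec(2d√(z² − h²)/(d² + z² − h² − R₁²)). -/

import Mathlib

set_option maxHeartbeats 2000000

open MeasureTheory Set Real
open scoped ENNReal

section Aux

theorem my_lintegral_polar (f : ℝ × ℝ → ℝ≥0∞) :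
    ∫⁻ p, f p = ∫⁻ p in polarCoord.target, ENNReal.ofReal p.1 * f (polarCoord.symm p) := by
  set B : ℝ × ℝ → ℝ × ℝ →L[ℝ] ℝ × ℝ := fun p =>
    LinearMap.toContinuousLinearMap (Matrix.toLin (Module.Basis.finTwoProd ℝ) (Module.Basis.finTwoProd ℝ)
      !![Real.cos p.2, -p.1 * Real.sin p.2; Real.sin p.2, p.1 * Real.cos p.2]) with hB
  have hA : ∀ p ∈ polarCoord.target, HasFDerivWithinAt polarCoord.symm (B p) polarCoord.target p :=
    fun p _ => (hasFDerivAt_polarCoord_symm p).hasFDerivWithinAt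
  have B_det : ∀ p, (B p).det = p.1 := by
    intro p
    conv_rhs => rw [← one_mul p.1, ← cos_sq_add_sin_sq p.2]
    simp only [hB, neg_mul, LinearMap.det_toContinuousLinearMap, LinearMap.det_toLin,
      Matrix.det_fin_two_of, sub_neg_eq_add]
    ring
  calc ∫⁻ p, f p = ∫⁻ p in polarCoord.source, f p := by
        rw [← setLIntegral_univ]
        exact (setLIntegral_congr polarCoord_source_ae_eq_univ.symm)
    _ = ∫⁻ p in polarCoord.symm '' polarCoord.target, f p := by
        rw [polarCoord.symm_image_target_eq_source]
    _ = ∫⁻ p in polarCoord.target, ENNReal.ofReal |(B p).det| * f (polarCoord.symm p) :=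
        lintegral_image_eq_lintegral_abs_det_fderiv_mul volume
          polarCoord.open_target.measurableSet hA polarCoord.symm.injOn f
    _ = ∫⁻ p in polarCoord.target, ENNReal.ofReal p.1 * f (polarCoord.symm p) := by
        refine setLIntegral_congr_fun polarCoord.open_target.measurableSet
          (fun p hp => ?_)
        rw [B_det, abs_of_pos hp.1]

theorem my_sqrt_deriv (h r : ℝ) (hh : 0 < h) :
    HasDerivAt (fun t : ℝ => Real.sqrt (t ^ 2 + h ^ 2)) (r / Real.sqrt (r ^ 2 + h ^ 2)) r := by
  have h0 : (0:ℝ) < r ^ 2 + h ^ 2 := by positivity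
  have h1 : HasDerivAt (fun t : ℝ => t ^ 2 + h ^ 2) (2 * r) r := by
    simpa using (hasDerivAt_pow 2 r).add_const (h ^ 2)
  have h2 := (Real.hasDerivAt_sqrt h0.ne').comp r h1
  refine h2.congr_deriv ?_
  have : Real.sqrt (r ^ 2 + h ^ 2) ≠ 0 := by positivity
  field_simp

theorem my_lintegral_G (h : ℝ) (hh : 0 < h) (f : ℝ × ℝ → ℝ≥0∞) :
    ∫⁻ p in Set.Ioi (0:ℝ) ×ˢ Set.Ioo (-π) π,
      ENNReal.ofReal (p.1 / Real.sqrt (p.1 ^ 2 + h ^ 2)) *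
        f (Real.sqrt (p.1 ^ 2 + h ^ 2), p.2) =
    ∫⁻ p in Set.Ioi h ×ˢ Set.Ioo (-π) π, f p := by
  set G : ℝ × ℝ → ℝ × ℝ := fun p => (Real.sqrt (p.1 ^ 2 + h ^ 2), p.2) with hG
  set D : ℝ × ℝ → ℝ × ℝ →L[ℝ] ℝ × ℝ := fun p =>
    (p.1 / Real.sqrt (p.1 ^ 2 + h ^ 2)) • (ContinuousLinearMap.fst ℝ ℝ ℝ) |>.prod
      (ContinuousLinearMap.snd ℝ ℝ ℝ) with hD
  have hmeas : MeasurableSet (Set.Ioi (0:ℝ) ×ˢ Set.Ioo (-π) π) :=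
    measurableSet_Ioi.prod measurableSet_Ioo
  have hder : ∀ p ∈ Set.Ioi (0:ℝ) ×ˢ Set.Ioo (-π) π,
      HasFDerivWithinAt G (D p) (Set.Ioi (0:ℝ) ×ˢ Set.Ioo (-π) π) p := by
    intro p _
    exact (HasFDerivAt.prodMk ((my_sqrt_deriv h p.1 hh).comp_hasFDerivAt p
      (hasFDerivAt_fst)) (hasFDerivAt_snd)).hasFDerivWithinAt
  have hdet : ∀ p ∈ Set.Ioi (0:ℝ) ×ˢ Set.Ioo (-π) π,
      (D p).det = p.1 / Real.sqrt (p.1 ^ 2 + h ^ 2) := by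
    intro p _
    have : D p = LinearMap.toContinuousLinearMap (Matrix.toLin (Module.Basis.finTwoProd ℝ)
        (Module.Basis.finTwoProd ℝ) !![p.1 / Real.sqrt (p.1 ^ 2 + h ^ 2), 0; 0, 1]) := by
      rw [Matrix.toLin_finTwoProd_toContinuousLinearMap]
      simp [hD]
    rw [this]
    simp [LinearMap.det_toContinuousLinearMap, LinearMap.det_toLin, Matrix.det_fin_two_of]
  have hinj : Set.InjOn G (Set.Ioi (0:ℝ) ×ˢ Set.Ioo (-π) π) := by
    rintro ⟨r₁, θ₁⟩ ⟨h1, _⟩ ⟨r₂, θ₂⟩ ⟨h2, _⟩ heq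
    simp only [hG, Prod.mk.injEq] at heq
    obtain ⟨he, rfl⟩ := heq
    have : r₁ ^ 2 + h ^ 2 = r₂ ^ 2 + h ^ 2 := by
      have := congrArg (fun t => t ^ 2) he
      simpa [Real.sq_sqrt, (by positivity : (0:ℝ) ≤ r₁ ^ 2 + h ^ 2),
        (by positivity : (0:ℝ) ≤ r₂ ^ 2 + h ^ 2)] using this
    have hr : r₁ ^ 2 = r₂ ^ 2 := by linarith
    have : r₁ = r₂ := by
      nlinarith [Set.mem_Ioi.mp h1, Set.mem_Ioi.mp h2]
    simp [this]
  have himg : G '' (Set.Ioi (0:ℝ) ×ˢ Set.Ioo (-π) π) = Set.Ioi h ×ˢ Set.Ioo (-π) π := by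
    ext ⟨z, θ⟩
    constructor
    · rintro ⟨⟨r, θ'⟩, ⟨hr, hθ⟩, heq⟩
      simp only [hG, Prod.mk.injEq] at heq
      obtain ⟨rfl, rfl⟩ := heq
      refine ⟨?_, hθ⟩
      have : h = Real.sqrt (h ^ 2) := by rw [Real.sqrt_sq hh.le]
      rw [Set.mem_Ioi, this]
      apply Real.sqrt_lt_sqrt (by positivity)
      nlinarith [Set.mem_Ioi.mp hr]
    · rintro ⟨hz, hθ⟩
      rw [Set.mem_Ioi] at hz
      have hz2 : (0:ℝ) < z ^ 2 - h ^ 2 := by nlinarith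
      refine ⟨(Real.sqrt (z ^ 2 - h ^ 2), θ), ⟨Real.sqrt_pos.mpr hz2, hθ⟩, ?_⟩
      simp only [hG, Prod.mk.injEq]
      rw [Real.sq_sqrt hz2.le]
      constructor
      · rw [sub_add_cancel, Real.sqrt_sq (by linarith : (0:ℝ) ≤ z)]
      · trivial
  calc ∫⁻ p in Set.Ioi (0:ℝ) ×ˢ Set.Ioo (-π) π,
        ENNReal.ofReal (p.1 / Real.sqrt (p.1 ^ 2 + h ^ 2)) * f (Real.sqrt (p.1 ^ 2 + h ^ 2), p.2)
      = ∫⁻ p in Set.Ioi (0:ℝ) ×ˢ Set.Ioo (-π) π, ENNReal.ofReal |(D p).det| * f (G p) := by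
        refine setLIntegral_congr_fun hmeas (fun p hp => ?_)
        have hp1 : 0 < p.1 := hp.1
        rw [hdet p hp, abs_of_nonneg (by positivity)]
    _ = ∫⁻ p in G '' (Set.Ioi (0:ℝ) ×ˢ Set.Ioo (-π) π), f p :=
        (lintegral_image_eq_lintegral_abs_det_fderiv_mul volume hmeas hder hinj f).symm
    _ = ∫⁻ p in Set.Ioi h ×ˢ Set.Ioo (-π) π, f p := by rw [himg]

theorem my_vol_disk (R : ℝ) (hR : 0 ≤ R) :
    volume {x : ℝ × ℝ | x.1 ^ 2 + x.2 ^ 2 ≤ R ^ 2} = ENNReal.ofReal (Real.pi * R ^ 2) := by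
  have hpre : Complex.measurableEquivRealProd ⁻¹' {x : ℝ × ℝ | x.1 ^ 2 + x.2 ^ 2 ≤ R ^ 2}
      = Metric.closedBall (0 : ℂ) R := by
    ext z
    simp only [Set.mem_preimage, Complex.measurableEquivRealProd_apply, Set.mem_setOf_eq,
      Metric.mem_closedBall, Complex.dist_eq, sub_zero]
    have h1 : ‖z‖ ^ 2 = z.re ^ 2 + z.im ^ 2 := by
      rw [Complex.sq_norm, Complex.normSq_apply]; ring
    constructor
    · intro hz
      nlinarith [norm_nonneg z]
    · intro hz
      nlinarith [norm_nonneg z]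
  calc volume {x : ℝ × ℝ | x.1 ^ 2 + x.2 ^ 2 ≤ R ^ 2}
      = volume (Complex.measurableEquivRealProd ⁻¹' {x : ℝ × ℝ | x.1 ^ 2 + x.2 ^ 2 ≤ R ^ 2}) := by
        rw [Complex.volume_preserving_equiv_real_prod.measure_preimage]
        exact (measurableSet_le (by fun_prop) measurable_const).nullMeasurableSet
    _ = volume (Metric.closedBall (0 : ℂ) R) := by rw [hpre]
    _ = ENNReal.ofReal (Real.pi * R ^ 2) := by
        rw [Complex.volume_closedBall, ← ENNReal.ofReal_pow hR]
        rw [← ENNReal.ofReal_coe_nnreal, ← ENNReal.ofReal_mul (by positivity)]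
        congr 1
        rw [NNReal.coe_real_pi]
        ring

theorem my_vol_A (R₁ R₂ d : ℝ) (hR₂ : 0 < R₂) (hd : 0 < d) (hsub : R₂ + d < R₁) :
    volume ({x : ℝ × ℝ | x.1 ^ 2 + x.2 ^ 2 ≤ R₁ ^ 2} \
        {x : ℝ × ℝ | (x.1 - d) ^ 2 + x.2 ^ 2 ≤ R₂ ^ 2}) =
      ENNReal.ofReal (Real.pi * (R₁ ^ 2 - R₂ ^ 2)) := by
  have hR₁ : 0 < R₁ := by linarith
  have hsubset : {x : ℝ × ℝ | (x.1 - d) ^ 2 + x.2 ^ 2 ≤ R₂ ^ 2} ⊆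
      {x : ℝ × ℝ | x.1 ^ 2 + x.2 ^ 2 ≤ R₁ ^ 2} := by
    intro x hx
    simp only [Set.mem_setOf_eq] at hx ⊢
    have h1 : x.1 - d ≤ R₂ := by nlinarith [sq_nonneg x.2]
    have h2 : (R₂ + d) ^ 2 < R₁ ^ 2 := by nlinarith
    nlinarith
  have hmeas2 : MeasurableSet {x : ℝ × ℝ | (x.1 - d) ^ 2 + x.2 ^ 2 ≤ R₂ ^ 2} :=
    measurableSet_le (by fun_prop) measurable_const
  have htrans : volume {x : ℝ × ℝ | (x.1 - d) ^ 2 + x.2 ^ 2 ≤ R₂ ^ 2}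
      = ENNReal.ofReal (Real.pi * R₂ ^ 2) := by
    have hp : MeasurePreserving (fun x : ℝ × ℝ => x - ((d, 0) : ℝ × ℝ)) volume volume :=
      measurePreserving_sub_right volume ((d, 0) : ℝ × ℝ)
    have : {x : ℝ × ℝ | (x.1 - d) ^ 2 + x.2 ^ 2 ≤ R₂ ^ 2} =
        (fun x : ℝ × ℝ => x - ((d, 0) : ℝ × ℝ)) ⁻¹' {x : ℝ × ℝ | x.1 ^ 2 + x.2 ^ 2 ≤ R₂ ^ 2} := by
      ext x
      simp [Prod.sub_def]
    rw [this, hp.measure_preimage]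
    · exact my_vol_disk R₂ hR₂.le
    · exact (measurableSet_le (by fun_prop) measurable_const).nullMeasurableSet
  rw [measure_diff hsubset hmeas2.nullMeasurableSet (by rw [htrans]; exact ENNReal.ofReal_ne_top),
    htrans, my_vol_disk R₁ hR₁.le, ← ENNReal.ofReal_sub _ (by positivity)]
  congr 1
  ring

end Aux






/-- Conditioned on `Z_c = z`, the angle `Ω` between the ground projection of the
TsUE–ABS link and the direction from the stadium center to the TBS is uniform (density `1/(2π)`)
for `√(R₂²+h²) ≤ z ≤ √((R₁−d)²+h²)`, and uniform on `[−ω̂, ω̂]` (density `1/(2ω̂)`) for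
`√((R₁−d)²+h²) < z ≤ √((R₁+d)²+h²)`, where `ω̂ = arccos((d²+z²−h²−R₁²)/(2d√(z²−h²)))`.
Formalized via the joint density `f_{Z_c,Ω}(z,ω) = f_{Z_c}(z) · f_{Ω}(ω|z)`. -/

theorem stmt11 (R₁ R₂ d h : ℝ) (hR₂ : 0 < R₂) (hd : 0 < d) (hh : 0 < h)
    (hsub : R₂ + d < R₁)
    (A : Set (ℝ × ℝ))
    (hA : A = {x : ℝ × ℝ | x.1 ^ 2 + x.2 ^ 2 ≤ R₁ ^ 2} \
              {x : ℝ × ℝ | (x.1 - d) ^ 2 + x.2 ^ 2 ≤ R₂ ^ 2})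
    (P : Measure (ℝ × ℝ)) (hP : P = (volume A)⁻¹ • volume.restrict A)
    (Zc : ℝ × ℝ → ℝ) (hZc : Zc = fun x => Real.sqrt ((x.1 - d) ^ 2 + x.2 ^ 2 + h ^ 2))
    -- signed angle at the stadium center `C = (d,0)` between the ray to the TsUE
    -- and the ray toward the TBS (the origin):
    (W : ℝ × ℝ → ℝ) (hW : W = fun x => Complex.arg ⟨d - x.1, -x.2⟩) :
    P.map (fun x => (Zc x, W x)) = volume.withDensity (fun p =>
      ENNReal.ofReal (
        if Real.sqrt (R₂ ^ 2 + h ^ 2) ≤ p.1 ∧ p.1 ≤ Real.sqrt ((R₁ - d) ^ 2 + h ^ 2)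
            ∧ -Real.pi ≤ p.2 ∧ p.2 ≤ Real.pi then
          (2 * p.1 / (R₁ ^ 2 - R₂ ^ 2)) * (1 / (2 * Real.pi))
        else if Real.sqrt ((R₁ - d) ^ 2 + h ^ 2) < p.1
            ∧ p.1 ≤ Real.sqrt ((R₁ + d) ^ 2 + h ^ 2)
            ∧ |p.2| ≤ Real.arccos
                ((d ^ 2 + p.1 ^ 2 - h ^ 2 - R₁ ^ 2) / (2 * d * Real.sqrt (p.1 ^ 2 - h ^ 2))) then
          (2 * p.1 / (Real.pi * (R₁ ^ 2 - R₂ ^ 2)) *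
              Real.arccos
                ((d ^ 2 + p.1 ^ 2 - h ^ 2 - R₁ ^ 2) / (2 * d * Real.sqrt (p.1 ^ 2 - h ^ 2)))) *
            (1 / (2 * Real.arccos
                ((d ^ 2 + p.1 ^ 2 - h ^ 2 - R₁ ^ 2) / (2 * d * Real.sqrt (p.1 ^ 2 - h ^ 2)))))
        else 0)) := by
  subst hP hZc hW
  have hπ := Real.pi_pos
  have hR₁ : 0 < R₁ := by linarith
  have hc' : (0:ℝ) < R₁ ^ 2 - R₂ ^ 2 := by nlinarith
  have hc : (0:ℝ) < Real.pi * (R₁ ^ 2 - R₂ ^ 2) := by positivity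
  set c : ℝ := Real.pi * (R₁ ^ 2 - R₂ ^ 2) with hcdef
  -- definitions
  set T : ℝ × ℝ → ℝ × ℝ := fun x =>
    (Real.sqrt ((x.1 - d) ^ 2 + x.2 ^ 2 + h ^ 2), Complex.arg ⟨d - x.1, -x.2⟩) with hTdef
  set A' : Set (ℝ × ℝ) := {x : ℝ × ℝ | (x.1 - d) ^ 2 + x.2 ^ 2 ≤ R₁ ^ 2} \
      {x : ℝ × ℝ | x.1 ^ 2 + x.2 ^ 2 ≤ R₂ ^ 2} with hA'def
  set G : ℝ × ℝ → ℝ × ℝ := fun p => (Real.sqrt (p.1 ^ 2 + h ^ 2), p.2) with hGdef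
  set S : ℝ × ℝ → ℝ × ℝ := fun x => ((d, 0) : ℝ × ℝ) + -x with hSdef
  set B' : Set (ℝ × ℝ) := {q : ℝ × ℝ | Real.sqrt (R₂ ^ 2 + h ^ 2) < q.1 ∧
      d ^ 2 + q.1 ^ 2 - h ^ 2 - R₁ ^ 2 ≤
        2 * d * Real.sqrt (q.1 ^ 2 - h ^ 2) * Real.cos q.2} with hB'def
  set g : ℝ × ℝ → ℝ≥0∞ := fun p => (ENNReal.ofReal c)⁻¹ *
      ((Set.Ioi h ×ˢ Set.Ioo (-π) π) ∩ B').indicator (fun q => ENNReal.ofReal q.1) p with hgdef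
  -- measurability facts
  have hmeasA : MeasurableSet A := by
    rw [hA]
    exact (measurableSet_le (by fun_prop) measurable_const).diff
      (measurableSet_le (by fun_prop) measurable_const)
  have hmeasA' : MeasurableSet A' :=
    (measurableSet_le (by fun_prop) measurable_const).diff
      (measurableSet_le (by fun_prop) measurable_const)
  have hmk : ∀ a b : ℝ, (⟨a, b⟩ : ℂ) = Complex.measurableEquivRealProd.symm (a, b) := by
    intro a b; rfl
  have hmeasT : Measurable T := by
    apply Measurable.prod
    · show Measurable fun x : ℝ × ℝ => Real.sqrt ((x.1 - d) ^ 2 + x.2 ^ 2 + h ^ 2); fun_prop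
    · simp only [hTdef]
      have : (fun x : ℝ × ℝ => Complex.arg ⟨d - x.1, -x.2⟩) =
          fun x : ℝ × ℝ => Complex.arg (Complex.measurableEquivRealProd.symm (d - x.1, -x.2)) := by
        funext x; rw [hmk]
      rw [this]
      exact Complex.measurable_arg.comp
        (Complex.measurableEquivRealProd.symm.measurable.comp (by fun_prop))
  have hmeasPC : Measurable (polarCoord : ℝ × ℝ → ℝ × ℝ) := by
    have : (polarCoord : ℝ × ℝ → ℝ × ℝ) = fun q =>
        (Real.sqrt (q.1 ^ 2 + q.2 ^ 2), Complex.arg (Complex.equivRealProd.symm q)) := rfl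
    rw [this]
    apply Measurable.prod
    · fun_prop
    · exact Complex.measurable_arg.comp Complex.equivRealProdCLM.symm.continuous.measurable
  have hmeasG : Measurable G := by fun_prop
  have m1 : Measurable fun q : ℝ × ℝ => Real.sqrt (q.1 ^ 2 - h ^ 2) :=
    Real.continuous_sqrt.measurable.comp (by fun_prop)
  have hmeasB' : MeasurableSet B' := by
    rw [hB'def, Set.setOf_and]
    exact (measurableSet_lt measurable_const measurable_fst).inter
      (measurableSet_le (by fun_prop)
        (((measurable_const.mul m1).mul (Real.continuous_cos.measurable.comp measurable_snd))))
  -- the measure preserving map S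
  have hS : MeasurePreserving S volume volume := by
    exact (measurePreserving_add_left volume ((d, 0) : ℝ × ℝ)).comp
      (Measure.measurePreserving_neg volume)
  -- key pointwise identity
  have hTS : ∀ x : ℝ × ℝ, T (S x) = G (polarCoord x) := by
    intro x
    have h1 : Real.sqrt (x.1 ^ 2 + x.2 ^ 2) ^ 2 = x.1 ^ 2 + x.2 ^ 2 :=
      Real.sq_sqrt (by positivity)
    have h2 : (⟨x.1, x.2⟩ : ℂ) = Complex.equivRealProd.symm x := by
      apply Complex.ext <;> simp [Complex.equivRealProd]
    simp only [hTdef, hSdef, hGdef, polarCoord_apply, Prod.fst_add, Prod.snd_add, Prod.fst_neg,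
      Prod.snd_neg]
    refine Prod.ext ?_ ?_
    · simp only
      rw [h1]
      ring_nf
    · simp only
      rw [← h2]
      norm_num
  have hvolA : volume A = ENNReal.ofReal c := by
    rw [hA]; exact my_vol_A R₁ R₂ d hR₂ hd hsub
  have step1 : Measure.map T ((volume A)⁻¹ • volume.restrict A) = volume.withDensity g := by
    refine Measure.ext fun s hs => ?_
    rw [Measure.map_apply hmeasT hs, Measure.smul_apply, smul_eq_mul,
      Measure.restrict_apply (hs.preimage hmeasT), withDensity_apply _ hs, hvolA]
    have e1 : volume (T ⁻¹' s ∩ A) = volume (S ⁻¹' (T ⁻¹' s ∩ A)) :=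
      (hS.measure_preimage (((hs.preimage hmeasT).inter hmeasA)).nullMeasurableSet).symm
    have e2 : S ⁻¹' (T ⁻¹' s ∩ A) = ((fun x => G (polarCoord x)) ⁻¹' s) ∩ A' := by
      ext x
      have q1 : (S x).1 ^ 2 + (S x).2 ^ 2 = (x.1 - d) ^ 2 + x.2 ^ 2 := by
        simp only [hSdef, Prod.fst_add, Prod.snd_add, Prod.fst_neg, Prod.snd_neg]; ring
      have q2 : ((S x).1 - d) ^ 2 + (S x).2 ^ 2 = x.1 ^ 2 + x.2 ^ 2 := by
        simp only [hSdef, Prod.fst_add, Prod.snd_add, Prod.fst_neg, Prod.snd_neg]; ring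
      simp only [Set.mem_preimage, Set.mem_inter_iff, hA, hA'def, Set.mem_diff,
        Set.mem_setOf_eq, hTS x, q1, q2]
    have e3 : volume (((fun x => G (polarCoord x)) ⁻¹' s) ∩ A')
        = ∫⁻ x, ((((fun x => G (polarCoord x)) ⁻¹' s) ∩ A').indicator 1) x :=
      (lintegral_indicator_one ((hs.preimage (hmeasG.comp hmeasPC)).inter hmeasA')).symm
    set E : Set (ℝ × ℝ) := ((fun x => G (polarCoord x)) ⁻¹' s) ∩ A' with hEdef
    have e4 := my_lintegral_polar (E.indicator 1)
    set Φ : ℝ × ℝ → ℝ≥0∞ :=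
      fun q => B'.indicator (fun q' => ENNReal.ofReal q'.1) q * s.indicator 1 q with hΦdef
    have e5 : ∫⁻ p in polarCoord.target, ENNReal.ofReal p.1 * E.indicator 1 (polarCoord.symm p)
        = ∫⁻ p in Set.Ioi (0:ℝ) ×ˢ Set.Ioo (-π) π,
            ENNReal.ofReal (p.1 / Real.sqrt (p.1 ^ 2 + h ^ 2)) *
              Φ (Real.sqrt (p.1 ^ 2 + h ^ 2), p.2) := by
      rw [polarCoord_target]
      refine setLIntegral_congr_fun (measurableSet_Ioi.prod measurableSet_Ioo)
        (fun p hp => ?_)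
      obtain ⟨hr, hθ⟩ := hp
      rw [Set.mem_Ioi] at hr
      set z : ℝ := Real.sqrt (p.1 ^ 2 + h ^ 2) with hz_def
      have hzpos : 0 < z := Real.sqrt_pos.mpr (by positivity)
      have hz2 : z ^ 2 = p.1 ^ 2 + h ^ 2 := Real.sq_sqrt (by positivity)
      have hz3 : Real.sqrt (z ^ 2 - h ^ 2) = p.1 := by
        rw [hz2, add_sub_cancel_right, Real.sqrt_sq hr.le]
      have hinv : polarCoord (polarCoord.symm p) = p :=
        polarCoord.right_inv (by rw [polarCoord_target]; exact ⟨hr, hθ⟩)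
      have hsymm : polarCoord.symm p = (p.1 * Real.cos p.2, p.1 * Real.sin p.2) := rfl
      have trig := Real.sin_sq_add_cos_sq p.2
      have c1 : (p.1 * Real.cos p.2 - d) ^ 2 + (p.1 * Real.sin p.2) ^ 2
          = p.1 ^ 2 - 2 * d * p.1 * Real.cos p.2 + d ^ 2 := by
        linear_combination p.1 ^ 2 * trig
      have c2 : (p.1 * Real.cos p.2) ^ 2 + (p.1 * Real.sin p.2) ^ 2 = p.1 ^ 2 := by
        linear_combination p.1 ^ 2 * trig
      have hzlt : Real.sqrt (R₂ ^ 2 + h ^ 2) < z ↔ R₂ < p.1 := by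
        constructor
        · intro hlt
          have hsq := mul_self_lt_mul_self (Real.sqrt_nonneg (R₂ ^ 2 + h ^ 2)) hlt
          rw [Real.mul_self_sqrt (by positivity)] at hsq
          nlinarith [hz2, hr, hR₂]
        · intro hlt
          rw [hz_def]
          apply Real.sqrt_lt_sqrt (by positivity)
          nlinarith
      have hmemE : polarCoord.symm p ∈ E ↔
          ((z, p.2) ∈ s ∧ (R₂ < p.1 ∧
            d ^ 2 + p.1 ^ 2 - R₁ ^ 2 ≤ 2 * d * p.1 * Real.cos p.2)) := by
        have hGp : G p = (z, p.2) := rfl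
        rw [hEdef]
        simp only [Set.mem_inter_iff, Set.mem_preimage]
        rw [hinv, hGp]
        simp only [hA'def, Set.mem_diff, Set.mem_setOf_eq, hsymm]
        constructor
        · rintro ⟨h1, h2, h3⟩
          refine ⟨h1, ?_, ?_⟩
          · by_contra hcon
            push_neg at hcon
            exact h3 (by nlinarith [c2])
          · nlinarith [c1]
        · rintro ⟨h1, h2, h3⟩
          refine ⟨h1, by nlinarith [c1], fun hcon => ?_⟩
          nlinarith [c2]
      have hmemB : (z, p.2) ∈ B' ↔
          (R₂ < p.1 ∧ d ^ 2 + p.1 ^ 2 - R₁ ^ 2 ≤ 2 * d * p.1 * Real.cos p.2) := by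
        rw [hB'def]
        simp only [Set.mem_setOf_eq, hz3, hzlt]
        constructor
        · rintro ⟨h1, h2⟩; exact ⟨h1, by nlinarith [hz2]⟩
        · rintro ⟨h1, h2⟩; exact ⟨h1, by nlinarith [hz2]⟩
      have hzne : z ≠ 0 := hzpos.ne'
      by_cases hin : ((z, p.2) ∈ s ∧ (R₂ < p.1 ∧
          d ^ 2 + p.1 ^ 2 - R₁ ^ 2 ≤ 2 * d * p.1 * Real.cos p.2))
      · have hE1 : polarCoord.symm p ∈ E := hmemE.mpr hin
        have hB1 : (z, p.2) ∈ B' := hmemB.mpr hin.2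
        rw [Set.indicator_of_mem hE1, hΦdef]
        simp only
        rw [Set.indicator_of_mem hB1, Set.indicator_of_mem hin.1]
        simp only [Pi.one_apply, mul_one]
        rw [← ENNReal.ofReal_mul (by positivity), div_mul_cancel₀ _ hzne]
      · have hE1 : polarCoord.symm p ∉ E := fun hcon => hin (hmemE.mp hcon)
        rw [Set.indicator_of_notMem hE1, hΦdef]
        simp only
        rcases Classical.em ((z, p.2) ∈ s) with hs1 | hs1
        · have hB1 : (z, p.2) ∉ B' := by
            intro hcon
            exact hin ⟨hs1, hmemB.mp hcon⟩
          rw [Set.indicator_of_notMem hB1]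
          simp
        · rw [Set.indicator_of_notMem hs1]
          simp
    have e6 := my_lintegral_G h hh Φ
    -- combine indicator bookkeeping
    have e7 : ∫⁻ p in Set.Ioi h ×ˢ Set.Ioo (-π) π, Φ p
        = ∫⁻ p in s, ((Set.Ioi h ×ˢ Set.Ioo (-π) π) ∩ B').indicator
            (fun q => ENNReal.ofReal q.1) p := by
      have hWm : MeasurableSet (Set.Ioi h ×ˢ Set.Ioo (-π) π : Set (ℝ × ℝ)) :=
        measurableSet_Ioi.prod measurableSet_Ioo
      rw [← lintegral_indicator hWm]
      have hfun : ∀ p, (Set.Ioi h ×ˢ Set.Ioo (-π) π : Set (ℝ × ℝ)).indicator Φ p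
          = s.indicator (fun q => ((Set.Ioi h ×ˢ Set.Ioo (-π) π) ∩ B').indicator
              (fun q' => ENNReal.ofReal q'.1) q) p := by
        intro p
        by_cases hsmem : p ∈ s
        · rw [Set.indicator_of_mem hsmem]
          by_cases hW : p ∈ (Set.Ioi h ×ˢ Set.Ioo (-π) π : Set (ℝ × ℝ))
          · by_cases hB : p ∈ B'
            · rw [Set.indicator_of_mem hW, Set.indicator_of_mem (Set.mem_inter hW hB), hΦdef]
              simp only
              rw [Set.indicator_of_mem hB, Set.indicator_of_mem hsmem]
              simp
            · rw [Set.indicator_of_mem hW,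
                Set.indicator_of_notMem (fun hcon => hB hcon.2), hΦdef]
              simp only
              rw [Set.indicator_of_notMem hB]
              simp
          · rw [Set.indicator_of_notMem hW,
              Set.indicator_of_notMem (fun hcon => hW hcon.1)]
        · rw [Set.indicator_of_notMem hsmem]
          by_cases hW : p ∈ (Set.Ioi h ×ˢ Set.Ioo (-π) π : Set (ℝ × ℝ))
          · rw [Set.indicator_of_mem hW, hΦdef]
            simp only
            rw [Set.indicator_of_notMem hsmem]
            simp
          · rw [Set.indicator_of_notMem hW]
      rw [lintegral_congr hfun, lintegral_indicator hs]
    rw [e1, e2, e3, e4, e5, e6, e7,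
      ← lintegral_const_mul' _ _ (ENNReal.inv_ne_top.mpr (ENNReal.ofReal_pos.mpr hc).ne')]
  rw [step1]
  refine withDensity_congr_ae ?_
  -- null lines
  have hline1 : ∀ a : ℝ, volume {p : ℝ × ℝ | p.1 = a} = 0 := by
    intro a
    have he : {p : ℝ × ℝ | p.1 = a} = ({a} : Set ℝ) ×ˢ (Set.univ : Set ℝ) := by
      ext p
      simp only [Set.mem_setOf_eq, Set.mem_prod, Set.mem_singleton_iff, Set.mem_univ, and_true]
    rw [he, MeasureTheory.Measure.volume_eq_prod, Measure.prod_prod]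
    simp
  have hline2 : ∀ a : ℝ, volume {p : ℝ × ℝ | p.2 = a} = 0 := by
    intro a
    have he : {p : ℝ × ℝ | p.2 = a} = (Set.univ : Set ℝ) ×ˢ ({a} : Set ℝ) := by
      ext p
      simp only [Set.mem_setOf_eq, Set.mem_prod, Set.mem_singleton_iff, Set.mem_univ, true_and]
    rw [he, MeasureTheory.Measure.volume_eq_prod, Measure.prod_prod]
    simp
  have key1 : ∀ a : ℝ, ∀ᵐ p : ℝ × ℝ, p.1 ≠ a := by
    intro a
    rw [ae_iff]
    simp only [ne_eq, not_not]
    exact hline1 a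
  have key2 : ∀ a : ℝ, ∀ᵐ p : ℝ × ℝ, p.2 ≠ a := by
    intro a
    rw [ae_iff]
    simp only [ne_eq, not_not]
    exact hline2 a
  -- ordering facts
  have hz01 : Real.sqrt (R₂ ^ 2 + h ^ 2) < Real.sqrt ((R₁ - d) ^ 2 + h ^ 2) :=
    Real.sqrt_lt_sqrt (by positivity) (by nlinarith)
  have hz12 : Real.sqrt ((R₁ - d) ^ 2 + h ^ 2) < Real.sqrt ((R₁ + d) ^ 2 + h ^ 2) :=
    Real.sqrt_lt_sqrt (by positivity) (by nlinarith)
  have hhz0 : h < Real.sqrt (R₂ ^ 2 + h ^ 2) := by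
    nlinarith [Real.sq_sqrt (show (0:ℝ) ≤ R₂ ^ 2 + h ^ 2 by positivity),
      Real.sqrt_nonneg (R₂ ^ 2 + h ^ 2)]
  have hsq1 := Real.sq_sqrt (show (0:ℝ) ≤ (R₁ - d) ^ 2 + h ^ 2 by positivity)
  have hsq2 := Real.sq_sqrt (show (0:ℝ) ≤ (R₁ + d) ^ 2 + h ^ 2 by positivity)
  filter_upwards [key1 (Real.sqrt (R₂ ^ 2 + h ^ 2)), key1 (Real.sqrt ((R₁ - d) ^ 2 + h ^ 2)),
    key1 (Real.sqrt ((R₁ + d) ^ 2 + h ^ 2)), key2 π, key2 (-π)] with p h0 h1 h2 h3 h4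
  obtain ⟨z, θ⟩ := p
  simp only at h0 h1 h2 h3 h4 ⊢
  by_cases hC1 : Real.sqrt (R₂ ^ 2 + h ^ 2) ≤ z ∧ z ≤ Real.sqrt ((R₁ - d) ^ 2 + h ^ 2)
      ∧ -π ≤ θ ∧ θ ≤ π
  · rw [if_pos hC1]
    obtain ⟨ha, hb, hc1, hd1⟩ := hC1
    have hz0 : Real.sqrt (R₂ ^ 2 + h ^ 2) < z := ha.lt_of_ne (Ne.symm h0)
    have hzb : z < Real.sqrt ((R₁ - d) ^ 2 + h ^ 2) := hb.lt_of_ne h1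
    have hθ1 : -π < θ := hc1.lt_of_ne (Ne.symm h4)
    have hθ2 : θ < π := hd1.lt_of_ne h3
    have hzh : h < z := lt_trans hhz0 hz0
    have hz2 : (0:ℝ) < z ^ 2 - h ^ 2 := by nlinarith
    have hr2 : Real.sqrt (z ^ 2 - h ^ 2) ^ 2 = z ^ 2 - h ^ 2 := Real.sq_sqrt hz2.le
    have hrpos : 0 < Real.sqrt (z ^ 2 - h ^ 2) := Real.sqrt_pos.mpr hz2
    have hzsq : z ^ 2 < (R₁ - d) ^ 2 + h ^ 2 := by
      nlinarith [mul_self_lt_mul_self (show (0:ℝ) ≤ z by linarith) hzb]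
    have hrlt : Real.sqrt (z ^ 2 - h ^ 2) < R₁ - d := by nlinarith
    have hmem : ((z, θ) : ℝ × ℝ) ∈ (Set.Ioi h ×ˢ Set.Ioo (-π) π) ∩ B' := by
      refine ⟨⟨hzh, hθ1, hθ2⟩, hz0, ?_⟩
      have h5 : (Real.sqrt (z ^ 2 - h ^ 2) + d) ^ 2 < R₁ ^ 2 := by nlinarith
      have h6 : -(2 * d * Real.sqrt (z ^ 2 - h ^ 2)) ≤
          2 * d * Real.sqrt (z ^ 2 - h ^ 2) * Real.cos θ := by
        nlinarith [Real.neg_one_le_cos θ, mul_pos hd hrpos]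
      nlinarith
    rw [hgdef]
    simp only
    rw [Set.indicator_of_mem hmem]
    have hval : 2 * z / (R₁ ^ 2 - R₂ ^ 2) * (1 / (2 * π)) = z / c := by
      rw [hcdef]; field_simp
    rw [hval, ENNReal.ofReal_div_of_pos hc, ENNReal.div_eq_inv_mul]
  · rw [if_neg hC1]
    by_cases hC2 : Real.sqrt ((R₁ - d) ^ 2 + h ^ 2) < z ∧ z ≤ Real.sqrt ((R₁ + d) ^ 2 + h ^ 2)
        ∧ |θ| ≤ Real.arccos ((d ^ 2 + z ^ 2 - h ^ 2 - R₁ ^ 2) /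
            (2 * d * Real.sqrt (z ^ 2 - h ^ 2)))
    · rw [if_pos hC2]
      obtain ⟨ha, hb, hθw⟩ := hC2
      have hz0 : Real.sqrt (R₂ ^ 2 + h ^ 2) < z := lt_trans hz01 ha
      have hzh : h < z := lt_trans hhz0 hz0
      have hz2 : (0:ℝ) < z ^ 2 - h ^ 2 := by nlinarith
      have hr2 : Real.sqrt (z ^ 2 - h ^ 2) ^ 2 = z ^ 2 - h ^ 2 := Real.sq_sqrt hz2.le
      have hrpos : 0 < Real.sqrt (z ^ 2 - h ^ 2) := Real.sqrt_pos.mpr hz2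
      have hzb : z < Real.sqrt ((R₁ + d) ^ 2 + h ^ 2) := hb.lt_of_ne h2
      have hrgt : R₁ - d < Real.sqrt (z ^ 2 - h ^ 2) := by
        have : (R₁ - d) ^ 2 + h ^ 2 < z ^ 2 := by
          nlinarith [mul_self_lt_mul_self (Real.sqrt_nonneg ((R₁ - d) ^ 2 + h ^ 2)) ha]
        nlinarith
      have hrlt : Real.sqrt (z ^ 2 - h ^ 2) < R₁ + d := by
        have : z ^ 2 < (R₁ + d) ^ 2 + h ^ 2 := by
          nlinarith [mul_self_lt_mul_self (show (0:ℝ) ≤ z by linarith) hzb]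
        nlinarith
      have h2dr : (0:ℝ) < 2 * d * Real.sqrt (z ^ 2 - h ^ 2) := by positivity
      set q : ℝ := (d ^ 2 + z ^ 2 - h ^ 2 - R₁ ^ 2) / (2 * d * Real.sqrt (z ^ 2 - h ^ 2))
        with hqdef
      have hq1 : q < 1 := by rw [hqdef, div_lt_one h2dr]; nlinarith
      have hqm1 : -1 < q := by rw [hqdef, lt_div_iff₀ h2dr]; nlinarith
      have hω : 0 < Real.arccos q := Real.arccos_pos.mpr hq1
      have hωπ : Real.arccos q ≤ π := Real.arccos_le_pi q
      have hθa : -π ≤ θ ∧ θ ≤ π := abs_le.mp (le_trans hθw hωπ)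
      have hθ1 : -π < θ := hθa.1.lt_of_ne (Ne.symm h4)
      have hθ2 : θ < π := hθa.2.lt_of_ne h3
      have hcosθ : q ≤ Real.cos θ := by
        have hcc := Real.cos_le_cos_of_nonneg_of_le_pi (abs_nonneg θ) hωπ hθw
        rwa [Real.cos_arccos hqm1.le hq1.le, Real.cos_abs] at hcc
      have hmem : ((z, θ) : ℝ × ℝ) ∈ (Set.Ioi h ×ˢ Set.Ioo (-π) π) ∩ B' := by
        refine ⟨⟨hzh, hθ1, hθ2⟩, hz0, ?_⟩
        have := (div_le_iff₀ h2dr).mp hcosθ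
        nlinarith
      rw [hgdef]
      simp only
      rw [Set.indicator_of_mem hmem]
      have hval : 2 * z / c * Real.arccos q * (1 / (2 * Real.arccos q)) = z / c := by
        field_simp
      rw [hval, ENNReal.ofReal_div_of_pos hc, ENNReal.div_eq_inv_mul]
    · rw [if_neg hC2, ENNReal.ofReal_zero, hgdef]
      simp only
      rw [Set.indicator_of_notMem ?_, mul_zero]
      intro hmem
      obtain ⟨⟨hzh, hθ1, hθ2⟩, hz0, hB2⟩ := hmem
      simp only [Set.mem_Ioi] at hzh hz0
      have hz2 : (0:ℝ) < z ^ 2 - h ^ 2 := by nlinarith [lt_trans hhz0 hz0]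
      have hr2 : Real.sqrt (z ^ 2 - h ^ 2) ^ 2 = z ^ 2 - h ^ 2 := Real.sq_sqrt hz2.le
      have hrpos : 0 < Real.sqrt (z ^ 2 - h ^ 2) := Real.sqrt_pos.mpr hz2
      have h2dr : (0:ℝ) < 2 * d * Real.sqrt (z ^ 2 - h ^ 2) := by positivity
      rcases lt_trichotomy z (Real.sqrt ((R₁ - d) ^ 2 + h ^ 2)) with hlt | heq | hgt
      · exact hC1 ⟨hz0.le, hlt.le, hθ1.le, hθ2.le⟩
      · exact h1 heq
      · rcases lt_trichotomy z (Real.sqrt ((R₁ + d) ^ 2 + h ^ 2)) with hlt2 | heq2 | hgt2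
        · apply hC2
          refine ⟨hgt, hlt2.le, ?_⟩
          have hrgt : R₁ - d < Real.sqrt (z ^ 2 - h ^ 2) := by
            have : (R₁ - d) ^ 2 + h ^ 2 < z ^ 2 := by
              nlinarith [mul_self_lt_mul_self (Real.sqrt_nonneg ((R₁ - d) ^ 2 + h ^ 2)) hgt]
            nlinarith
          have hqm1 : -1 < (d ^ 2 + z ^ 2 - h ^ 2 - R₁ ^ 2) /
              (2 * d * Real.sqrt (z ^ 2 - h ^ 2)) := by
            rw [lt_div_iff₀ h2dr]; nlinarith
          have hcosθ : (d ^ 2 + z ^ 2 - h ^ 2 - R₁ ^ 2) /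
              (2 * d * Real.sqrt (z ^ 2 - h ^ 2)) ≤ Real.cos θ := by
            rw [div_le_iff₀ h2dr]; nlinarith
          have habs : |θ| ≤ π := abs_le.mpr ⟨hθ1.le, hθ2.le⟩
          calc |θ| = Real.arccos (Real.cos |θ|) :=
                (Real.arccos_cos (abs_nonneg θ) habs).symm
            _ = Real.arccos (Real.cos θ) := by rw [Real.cos_abs]
            _ ≤ Real.arccos ((d ^ 2 + z ^ 2 - h ^ 2 - R₁ ^ 2) /
                  (2 * d * Real.sqrt (z ^ 2 - h ^ 2))) := by
                rw [Real.arccos_eq_pi_div_two_sub_arcsin, Real.arccos_eq_pi_div_two_sub_arcsin]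
                have := monotone_arcsin hcosθ
                linarith
        · exact h2 heq2
        · have hrgt2 : R₁ + d < Real.sqrt (z ^ 2 - h ^ 2) := by
            have : (R₁ + d) ^ 2 + h ^ 2 < z ^ 2 := by
              nlinarith [mul_self_lt_mul_self (Real.sqrt_nonneg ((R₁ + d) ^ 2 + h ^ 2)) hgt2]
            nlinarith
          have hcos1 := Real.cos_le_one θ
          nlinarith [mul_pos hd hrpos]
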